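/- arXiv:2102.10939 — 2 statements merged into one kernel-verified Lean document; each statement's English description precedes it below -/
import Mathlib

section
/- Monte Carlo amplitude recovery: let $f(t) = \sum_{j=1}^k a_j e^{2\pi i w_j \cdot t}$ on $\mathbb{R}^d$ with $\min_{i \neq j}|w_i - w_j| > \eta$ and $|a_j| \le A$, and let $w^o \in \mathbb{R}^d$ satisfy $|w^o - w_1| \le \rho$. Let $R > 0$ and consider $I = R^{-d} \int_{[0,R]^d} f(t) e^{-2\pi i w^o \cdot t}\, dt$. Then $|I - a_1| \le A\left(2\pi \rho R \sqrt{d} + (k-1) \max_{j \ge 2} \prod_{l=1}^d \min\left(1, \frac{1}{\pi R |(w_j - w^o)_l|}\right)\right)$; in particular if $\rho \le \epsilon^2 \eta /(4\pi \sqrt{d} k R \eta)$ and $R \ge k/\epsilon^2$ with $\max_j |(w_j - w^o)| \ge \eta/2$ for $j \ge 2$, then $|I - a_1| \le O(A\epsilon^2)$. -/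
open Finset Complex MeasureTheory

lemma norm_exp_I_sub_one_le (θ : ℝ) : ‖Complex.exp (θ * Complex.I) - 1‖ ≤ |θ| := by
  have h : Complex.exp (Complex.I * θ) - 1
      = Complex.I * ∫ x in (0:ℝ)..θ, Complex.exp (Complex.I * x) := by
    rw [integral_exp_mul_complex Complex.I_ne_zero]
    have hI : Complex.I * Complex.I = -1 := Complex.I_mul_I
    field_simp
    simp
  have hb : ‖∫ x in (0:ℝ)..θ, Complex.exp (Complex.I * x)‖ ≤ 1 * |θ - 0| := by
    apply intervalIntegral.norm_integral_le_of_norm_le_const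
    intro x _
    rw [mul_comm, Complex.norm_exp_ofReal_mul_I]
  rw [mul_comm (θ:ℂ)] at *
  rw [h, norm_mul, Complex.norm_I, one_mul]
  simpa using hb

noncomputable def gInt (R v : ℝ) : ℂ :=
  ∫ s in Set.Icc (0:ℝ) R, Complex.exp (2 * Real.pi * Complex.I * (v * s))

lemma gInt_zero {R : ℝ} (hR : 0 ≤ R) : gInt R 0 = R := by
  simp [gInt, Real.volume_Icc, ENNReal.toReal_ofReal, hR]

lemma gInt_eq {R v : ℝ} (hR : 0 ≤ R) (hv : v ≠ 0) :
    gInt R v = (Complex.exp (2 * Real.pi * Complex.I * (v * R)) - 1)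
      / (2 * Real.pi * Complex.I * v) := by
  have hc : (2 * Real.pi * Complex.I * v : ℂ) ≠ 0 := by
    simp [Complex.ext_iff, Real.pi_ne_zero, hv]
  rw [gInt, MeasureTheory.integral_Icc_eq_integral_Ioc,
    ← intervalIntegral.integral_of_le hR]
  have : ∀ s : ℝ, (2 * Real.pi * Complex.I * (v * s) : ℂ)
      = (2 * Real.pi * Complex.I * v) * s := by intro s; ring
  simp_rw [this]
  rw [integral_exp_mul_complex hc]
  simp

lemma norm_exp_two_pi (x : ℝ) : ‖Complex.exp (2 * Real.pi * Complex.I * x)‖ = 1 := by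
  rw [Complex.norm_exp]
  simp

lemma norm_gInt_le {R : ℝ} (hR : 0 ≤ R) (v : ℝ) : ‖gInt R v‖ ≤ R := by
  refine le_trans (norm_integral_le_integral_norm _) ?_
  have : ∀ s : ℝ, ‖Complex.exp (2 * Real.pi * Complex.I * (v * s))‖ = 1 := by
    intro s
    have := norm_exp_two_pi (v * s)
    rw [← this]; norm_cast
  simp_rw [this]
  simp [Real.volume_Icc, ENNReal.toReal_ofReal, hR]

lemma norm_gInt_le' {R v : ℝ} (hR : 0 ≤ R) (hv : v ≠ 0) :
    ‖gInt R v‖ ≤ 1 / (Real.pi * |v|) := by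
  rw [gInt_eq hR hv, norm_div]
  have h1 : ‖Complex.exp (2 * Real.pi * Complex.I * (v * R)) - 1‖ ≤ 2 := by
    refine le_trans (norm_sub_le _ _) ?_
    have := norm_exp_two_pi (v * R)
    rw [show ((v*R:ℝ):ℂ) = (v:ℂ)*(R:ℂ) by push_cast; ring] at this
    rw [this]; norm_num
  have h2 : ‖(2 * Real.pi * Complex.I * v : ℂ)‖ = 2 * Real.pi * |v| := by
    simp [norm_mul, abs_of_pos Real.pi_pos, Complex.norm_real, Real.norm_eq_abs]
  rw [h2]
  rw [div_le_div_iff₀ (by positivity) (by positivity)]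
  calc ‖Complex.exp (2 * Real.pi * Complex.I * (v * R)) - 1‖ * (Real.pi * |v|)
      ≤ 2 * (Real.pi * |v|) := by
        exact mul_le_mul_of_nonneg_right h1 (by positivity)
    _ = 1 * (2 * Real.pi * |v|) := by ring

lemma norm_gInt_sub {R : ℝ} (hR : 0 ≤ R) (v : ℝ) :
    ‖gInt R v - R‖ ≤ Real.pi * |v| * R ^ 2 := by
  have hcont : Continuous fun s : ℝ => Complex.exp (2 * Real.pi * Complex.I * (v * s)) := by
    fun_prop
  have hint : IntegrableOn (fun s : ℝ => Complex.exp (2 * Real.pi * Complex.I * (v * s)))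
      (Set.Icc 0 R) := hcont.integrableOn_Icc
  have hconst : IntegrableOn (fun _ : ℝ => (1:ℂ)) (Set.Icc (0:ℝ) R) :=
    integrableOn_const (by simp [Real.volume_Icc])
  have hRval : ∫ _ in Set.Icc (0:ℝ) R, (1:ℂ) = (R:ℂ) := by
    simp [Real.volume_Icc, ENNReal.toReal_ofReal, hR]
  have h1 : gInt R v - R = ∫ s in Set.Icc (0:ℝ) R,
      (Complex.exp (2 * Real.pi * Complex.I * (v * s)) - 1) := by
    rw [MeasureTheory.integral_sub hint hconst, hRval, gInt]
  rw [h1]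
  refine le_trans (norm_integral_le_integral_norm _) ?_
  have hmono : ∫ s in Set.Icc (0:ℝ) R,
      ‖Complex.exp (2 * Real.pi * Complex.I * (v * s)) - 1‖
      ≤ ∫ s in Set.Icc (0:ℝ) R, 2 * Real.pi * |v| * s := by
    apply MeasureTheory.setIntegral_mono_on
    · exact (hcont.sub continuous_const).norm.integrableOn_Icc
    · exact (continuous_const.mul continuous_id).integrableOn_Icc
    · exact measurableSet_Icc
    · intro s hs
      have : (2 * Real.pi * Complex.I * (v * s) : ℂ)
          = ((2 * Real.pi * (v*s) : ℝ) : ℂ) * Complex.I := by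
        push_cast; ring
      rw [this]
      refine le_trans (norm_exp_I_sub_one_le _) ?_
      rw [abs_mul, abs_mul, abs_mul, _root_.abs_of_nonneg hs.1,
        abs_of_pos Real.pi_pos]
      norm_num
      ring_nf
      exact le_rfl
  refine hmono.trans ?_
  have : ∫ s in Set.Icc (0:ℝ) R, 2 * Real.pi * |v| * s
      = 2 * Real.pi * |v| * ∫ s in Set.Icc (0:ℝ) R, s := by
    rw [MeasureTheory.integral_const_mul]
  rw [this, MeasureTheory.integral_Icc_eq_integral_Ioc,
    ← intervalIntegral.integral_of_le hR, integral_id]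
  ring_nf
  rfl

lemma setIntegral_pi_prod {d : ℕ} (f : Fin d → ℝ → ℂ) (s : Fin d → Set ℝ)
    (hs : ∀ l, MeasurableSet (s l)) :
    ∫ t in Set.pi Set.univ s, ∏ l, f l (t l) = ∏ l, ∫ x in s l, f l x := by
  rw [← MeasureTheory.integral_indicator (MeasurableSet.univ_pi hs)]
  have key : ∀ x : Fin d → ℝ, (Set.pi Set.univ s).indicator (fun t => ∏ l, f l (t l)) x
      = ∏ l, (s l).indicator (f l) (x l) := by
    intro x
    by_cases h : x ∈ Set.pi Set.univ s
    · rw [Set.indicator_of_mem h]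
      exact Finset.prod_congr rfl fun l _ =>
        (Set.indicator_of_mem (h l (Set.mem_univ l)) _).symm
    · rw [Set.indicator_of_notMem h]
      rw [Set.mem_univ_pi] at h
      push_neg at h
      obtain ⟨l, hl⟩ := h
      exact (Finset.prod_eq_zero (Finset.mem_univ l)
        (Set.indicator_of_notMem hl _)).symm
  simp_rw [key]
  rw [MeasureTheory.integral_fintype_prod_volume_eq_prod
    (f := fun l x => (s l).indicator (f l) x)]
  exact Finset.prod_congr rfl fun l _ => MeasureTheory.integral_indicator (hs l)

lemma norm_prod_sub_one_le {ι : Type*} (s : Finset ι) (f : ι → ℂ)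
    (h : ∀ i ∈ s, ‖f i‖ ≤ 1) :
    ‖∏ i ∈ s, f i - 1‖ ≤ ∑ i ∈ s, ‖f i - 1‖ := by
  induction s using Finset.cons_induction with
  | empty => simp
  | cons a s ha ih =>
    rw [Finset.prod_cons, Finset.sum_cons]
    have e : f a * ∏ i ∈ s, f i - 1 = f a * (∏ i ∈ s, f i - 1) + (f a - 1) := by ring
    rw [e]
    calc ‖f a * (∏ i ∈ s, f i - 1) + (f a - 1)‖
        ≤ ‖f a‖ * ‖∏ i ∈ s, f i - 1‖ + ‖f a - 1‖ := by
          refine le_trans (norm_add_le _ _) ?_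
          rw [norm_mul]
      _ ≤ 1 * (∑ i ∈ s, ‖f i - 1‖) + ‖f a - 1‖ := by
          gcongr
          · exact h a (Finset.mem_cons_self a s)
          · exact ih fun i hi => h i (Finset.mem_cons_of_mem hi)
      _ = ‖f a - 1‖ + ∑ i ∈ s, ‖f i - 1‖ := by ring

/-- Monte Carlo amplitude recovery: correlating the signal against a recovered
frequency `w⁰` close to `w₁` returns `a₁` up to an explicit error. -/
theorem amplitude_recovery_error
    (d k : ℕ) (hd : 1 ≤ d) (hk : 1 ≤ k)
    (η A ρ R : ℝ) (hη : 0 < η) (hA : 0 < A) (hρ : 0 ≤ ρ) (hR : 0 < R)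
    (a : Fin k → ℂ) (ha : ∀ j, ‖a j‖ ≤ A)
    (w : Fin k → Fin d → ℝ)
    (hsep : ∀ i j : Fin k, i ≠ j →
      η < Real.sqrt (∑ l, (w i l - w j l) ^ 2))
    (wo : Fin d → ℝ)
    (hwo : Real.sqrt (∑ l, (wo l - w ⟨0, hk⟩ l) ^ 2) ≤ ρ)
    (B : ℝ)
    (hB : ∀ j : Fin k, j ≠ ⟨0, hk⟩ →
      (∏ l, (if w j l - wo l = 0 then (1:ℝ)
        else min 1 (1 / (Real.pi * R * |w j l - wo l|)))) ≤ B) :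
    ‖((R ^ d : ℝ) : ℂ)⁻¹ *
        (∫ t in Set.pi Set.univ (fun _ : Fin d => Set.Icc (0:ℝ) R),
          (∑ j, a j * Complex.exp (2 * Real.pi * Complex.I *
              (∑ l, w j l * t l))) *
            Complex.exp (-(2 * Real.pi * Complex.I) * (∑ l, wo l * t l))) -
      a ⟨0, hk⟩‖ ≤
    A * (2 * Real.pi * ρ * R * Real.sqrt d + (k - 1) * B) := by
  set j0 : Fin k := ⟨0, hk⟩ with hj0
  set S : Set (Fin d → ℝ) := Set.pi Set.univ (fun _ : Fin d => Set.Icc (0:ℝ) R) with hS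
  -- Step 1: pointwise rewrite of the integrand
  have hpt : ∀ t : Fin d → ℝ,
      (∑ j, a j * Complex.exp (2 * Real.pi * Complex.I * (∑ l, w j l * t l))) *
        Complex.exp (-(2 * Real.pi * Complex.I) * (∑ l, wo l * t l))
      = ∑ j, a j * ∏ l, Complex.exp (2 * Real.pi * Complex.I *
          ((w j l - wo l : ℝ) * (t l : ℝ))) := by
    intro t
    rw [Finset.sum_mul]
    refine Finset.sum_congr rfl fun j _ => ?_
    rw [mul_assoc, ← Complex.exp_add]
    congr 1
    rw [← Complex.exp_sum]
    congr 1
    push_cast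
    rw [Finset.mul_sum, Finset.mul_sum, ← Finset.sum_add_distrib]
    refine Finset.sum_congr rfl fun l _ => ?_
    ring
  -- Step 2 & 3: rewrite the integral as a sum of products of 1D integrals
  have hint : ∀ j : Fin k, IntegrableOn (fun t : Fin d → ℝ =>
      a j * ∏ l, Complex.exp (2 * Real.pi * Complex.I *
        ((w j l - wo l : ℝ) * (t l : ℝ)))) S := by
    intro j
    apply ContinuousOn.integrableOn_compact
    · exact isCompact_univ_pi (fun _ => isCompact_Icc)
    · apply Continuous.continuousOn
      fun_prop
  have key : ((R ^ d : ℝ) : ℂ)⁻¹ *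
      (∫ t in S,
        (∑ j, a j * Complex.exp (2 * Real.pi * Complex.I * (∑ l, w j l * t l))) *
          Complex.exp (-(2 * Real.pi * Complex.I) * (∑ l, wo l * t l)))
      = ∑ j, a j * ∏ l, (gInt R (w j l - wo l) / R) := by
    have h1 : (∫ t in S,
        (∑ j, a j * Complex.exp (2 * Real.pi * Complex.I * (∑ l, w j l * t l))) *
          Complex.exp (-(2 * Real.pi * Complex.I) * (∑ l, wo l * t l)))
        = ∑ j, a j * ∏ l, gInt R (w j l - wo l) := by
      rw [MeasureTheory.integral_congr_ae (Filter.EventuallyEq.of_eq (funext hpt))]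
      rw [MeasureTheory.integral_finset_sum _ (fun j _ => hint j)]
      refine Finset.sum_congr rfl fun j _ => ?_
      rw [MeasureTheory.integral_const_mul]
      congr 1
      exact setIntegral_pi_prod
        (fun l x => Complex.exp (2 * Real.pi * Complex.I * ((w j l - wo l : ℝ) * (x:ℝ))))
        (fun _ => Set.Icc 0 R) (fun _ => measurableSet_Icc)
    rw [h1, Finset.mul_sum]
    refine Finset.sum_congr rfl fun j _ => ?_
    rw [Finset.prod_div_distrib, Finset.prod_const]
    simp only [Finset.card_univ, Fintype.card_fin]
    have hRne : ((R:ℂ))^d ≠ 0 := by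
      simp [Complex.ofReal_ne_zero, ne_of_gt hR]
    push_cast
    field_simp
  rw [key]
  have hnormR : ‖(R:ℂ)‖ = R := by
    rw [Complex.norm_real, Real.norm_eq_abs, abs_of_pos hR]
  have hz1 : ∀ (j : Fin k) (l : Fin d), ‖gInt R (w j l - wo l) / R‖ ≤ 1 := by
    intro j l
    rw [norm_div, hnormR, div_le_one hR]
    exact norm_gInt_le hR.le _
  have hz2 : ∀ l : Fin d, ‖gInt R (w j0 l - wo l) / R - 1‖
      ≤ Real.pi * |w j0 l - wo l| * R := by
    intro l
    have h0 : gInt R (w j0 l - wo l) / R - 1 = (gInt R (w j0 l - wo l) - R) / R := by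
      have : ((R:ℝ):ℂ) ≠ 0 := by exact_mod_cast ne_of_gt hR
      field_simp
    rw [h0, norm_div, hnormR, div_le_iff₀ hR]
    calc ‖gInt R (w j0 l - wo l) - (R:ℂ)‖ ≤ Real.pi * |w j0 l - wo l| * R ^ 2 :=
          norm_gInt_sub hR.le _
      _ = Real.pi * |w j0 l - wo l| * R * R := by ring
  have hz3 : ∀ (j : Fin k) (l : Fin d), ‖gInt R (w j l - wo l) / R‖
      ≤ (if w j l - wo l = 0 then (1:ℝ)
        else min 1 (1 / (Real.pi * R * |w j l - wo l|))) := by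
    intro j l
    by_cases hv : w j l - wo l = 0
    · rw [if_pos hv, hv, gInt_zero hR.le]
      rw [div_self (by exact_mod_cast ne_of_gt hR : ((R:ℝ):ℂ) ≠ 0)]
      simp
    · rw [if_neg hv]
      refine le_min (hz1 j l) ?_
      rw [norm_div, hnormR]
      have he : 1 / (Real.pi * R * |w j l - wo l|)
          = (1 / (Real.pi * |w j l - wo l|)) / R := by
        rw [div_div]; ring_nf
      rw [he]
      gcongr
      exact norm_gInt_le' hR.le hv
  -- Cauchy-Schwarz
  have hcs : ∑ l, |w j0 l - wo l| ≤ Real.sqrt d * ρ := by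
    have h1 : (∑ l, |w j0 l - wo l|) ^ 2 ≤ (d:ℝ) * ∑ l, (wo l - w j0 l) ^ 2 := by
      have h := sq_sum_le_card_mul_sum_sq (s := (univ : Finset (Fin d)))
        (f := fun l => |w j0 l - wo l|)
      simp only [Finset.card_univ, Fintype.card_fin] at h
      have heq : ∑ l, |w j0 l - wo l| ^ 2 = ∑ l, (wo l - w j0 l) ^ 2 := by
        refine Finset.sum_congr rfl fun l _ => ?_
        rw [_root_.sq_abs]; ring
      rwa [heq] at h
    have hnn : 0 ≤ ∑ l, (wo l - w j0 l) ^ 2 := by positivity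
    have h2 : ∑ l, (wo l - w j0 l) ^ 2 ≤ ρ ^ 2 := by
      nlinarith [Real.sq_sqrt hnn, Real.sqrt_nonneg (∑ l, (wo l - w j0 l) ^ 2)]
    have h3 : (∑ l, |w j0 l - wo l|) ^ 2 ≤ (Real.sqrt d * ρ) ^ 2 := by
      calc (∑ l, |w j0 l - wo l|) ^ 2 ≤ (d:ℝ) * ρ ^ 2 := by nlinarith [Nat.cast_nonneg (α := ℝ) d]
        _ = (Real.sqrt d * ρ) ^ 2 := by
            rw [mul_pow, Real.sq_sqrt (Nat.cast_nonneg d)]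
    have h4 := Real.sqrt_le_sqrt h3
    rwa [Real.sqrt_sq (Finset.sum_nonneg fun l _ => abs_nonneg _),
      Real.sqrt_sq (by positivity)] at h4
  -- bound for the j = 0 term
  have hb1 : ‖(∏ l, gInt R (w j0 l - wo l) / R) - 1‖
      ≤ Real.pi * R * (Real.sqrt d * ρ) := by
    refine le_trans (norm_prod_sub_one_le univ _ (fun l _ => hz1 j0 l)) ?_
    calc ∑ l, ‖gInt R (w j0 l - wo l) / R - 1‖
        ≤ ∑ l, Real.pi * |w j0 l - wo l| * R := Finset.sum_le_sum fun l _ => hz2 l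
      _ = Real.pi * R * ∑ l, |w j0 l - wo l| := by
          rw [Finset.mul_sum]
          exact Finset.sum_congr rfl fun l _ => by ring
      _ ≤ Real.pi * R * (Real.sqrt d * ρ) := by
          exact mul_le_mul_of_nonneg_left hcs (by positivity)
  -- bound for the other terms
  have hterm : ∀ j ∈ Finset.univ.erase j0,
      ‖a j * ∏ l, gInt R (w j l - wo l) / R‖ ≤ A * B := by
    intro j hj
    rw [norm_mul, norm_prod]
    have hj' : j ≠ j0 := (Finset.mem_erase.mp hj).1
    have hp : ∏ l, ‖gInt R (w j l - wo l) / R‖ ≤ B :=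
      le_trans (Finset.prod_le_prod (fun l _ => norm_nonneg _) (fun l _ => hz3 j l))
        (hB j hj')
    have hp0 : (0:ℝ) ≤ ∏ l, ‖gInt R (w j l - wo l) / R‖ :=
      Finset.prod_nonneg fun l _ => norm_nonneg _
    exact mul_le_mul (ha j) hp hp0 hA.le
  have hsum2 : ‖∑ j ∈ Finset.univ.erase j0, a j * ∏ l, gInt R (w j l - wo l) / R‖
      ≤ ((k:ℝ) - 1) * (A * B) := by
    refine le_trans (norm_sum_le _ _) ?_
    refine le_trans (Finset.sum_le_card_nsmul _ _ (A * B) hterm) ?_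
    rw [Finset.card_erase_of_mem (Finset.mem_univ j0), Finset.card_univ, Fintype.card_fin]
    rw [nsmul_eq_mul, Nat.cast_sub hk]
    simp
  -- assemble
  have e : (∑ j, a j * ∏ l, gInt R (w j l - wo l) / R) - a j0
      = a j0 * ((∏ l, gInt R (w j0 l - wo l) / R) - 1)
        + ∑ j ∈ Finset.univ.erase j0, a j * ∏ l, gInt R (w j l - wo l) / R := by
    rw [← Finset.add_sum_erase _ _ (Finset.mem_univ j0)]
    ring
  rw [e]
  have hmain : ‖a j0 * ((∏ l, gInt R (w j0 l - wo l) / R) - 1)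
        + ∑ j ∈ Finset.univ.erase j0, a j * ∏ l, gInt R (w j l - wo l) / R‖
      ≤ A * (Real.pi * R * (Real.sqrt d * ρ)) + ((k:ℝ) - 1) * (A * B) := by
    refine le_trans (norm_add_le _ _) (add_le_add ?_ hsum2)
    rw [norm_mul]
    exact mul_le_mul (ha j0) hb1 (norm_nonneg _) hA.le
  refine hmain.trans ?_
  have hx : 0 ≤ Real.pi * R * (Real.sqrt d * ρ) := by positivity
  have h2 : A * (Real.pi * R * (Real.sqrt d * ρ)) ≤ A * (2 * Real.pi * ρ * R * Real.sqrt d) := by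
    apply mul_le_mul_of_nonneg_left _ hA.le
    nlinarith [hx]
  calc A * (Real.pi * R * (Real.sqrt d * ρ)) + ((k:ℝ) - 1) * (A * B)
      ≤ A * (2 * Real.pi * ρ * R * Real.sqrt d) + ((k:ℝ) - 1) * (A * B) := by linarith
    _ = A * (2 * Real.pi * ρ * R * Real.sqrt d + ((k:ℝ) - 1) * B) := by ring
end

section
/- Importance-sampled convolution estimator (expectation identity): let $N \ge 2$ be even, let $G : \mathbb{Z} \cap [-N/2, N/2) \to \mathbb{C}$ be any function, and let $t$ be uniform on $(-1/2, 1/2)$. Define $Z(t) = G\left(\lfloor \mathrm{sgn}(t)((N/2+1)^{2|t|} - 1)\rfloor\right) \cdot 2\ln(N/2+1)\,(N/2+1)^{2|t|}$, with $\mathrm{sgn}(t) = 1$ for $t \ge 0$ and $-1$ otherwise. Then $\mathbb{E}[Z(t)] = \sum_{z \in \mathbb{Z} \cap [-N/2, N/2)} G(z)$ (up to the boundary convention identifying the point $z = -N/2$ appropriately), and $|Z(t)| \le 2\ln(N/2+1)(N+2) \sup_z |G(z)| \cdot \mathbf{1}$; moreover if $|G(z)| \le C/\max(1, |z|)$ then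 $\sup_t |Z(t)| \le C'\ln(N)$ for an absolute constant $C'$. -/
open Finset Complex MeasureTheory intervalIntegral

lemma my_image_Ioo {f : ℝ → ℝ} (hm : StrictMono f) (hc : Continuous f) {a b : ℝ}
    (hab : a ≤ b) : f '' Set.Ioo a b = Set.Ioo (f a) (f b) := by
  apply Set.Subset.antisymm
  · rintro y ⟨x, hx, rfl⟩
    exact ⟨hm hx.1, hm hx.2⟩
  · exact intermediate_value_Ioo hab hc.continuousOn

lemma floorcomp_meas (G : ℤ → ℂ) : Measurable (fun u : ℝ => G ⌊u⌋) :=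
  (measurable_of_countable G).comp Int.measurable_floor

lemma floorcomp_intble (G : ℤ → ℂ) (x y : ℝ) :
    IntervalIntegrable (fun u : ℝ => G ⌊u⌋) volume x y := by
  rw [intervalIntegrable_iff]
  apply Measure.integrableOn_of_bounded
    (M := ∑ z ∈ Finset.Icc ⌊min x y⌋ ⌊max x y⌋, ‖G z‖)
  · exact measure_Ioc_lt_top.ne
  · exact (floorcomp_meas G).aestronglyMeasurable
  · filter_upwards [ae_restrict_mem measurableSet_uIoc] with u hu
    have h1 : ⌊u⌋ ∈ Finset.Icc ⌊min x y⌋ ⌊max x y⌋ := by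
      rw [Finset.mem_Icc]
      exact ⟨Int.floor_le_floor hu.1.le, Int.floor_le_floor hu.2⟩
    exact Finset.single_le_sum (fun i _ => norm_nonneg (G i)) h1

lemma unit_integral (G : ℤ → ℂ) (k : ℤ) : ∫ u in (k:ℝ)..((k:ℝ)+1), G ⌊u⌋ = G k := by
  rw [intervalIntegral.integral_of_le (by linarith), integral_Ioc_eq_integral_Ioo,
    setIntegral_congr_fun measurableSet_Ioo (g := fun _ => G k)
      (fun u hu => by rw [Int.floor_eq_iff.mpr ⟨hu.1.le, by exact_mod_cast hu.2⟩])]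
  simp [Real.volume_Ioo]

lemma grid_integral (G : ℤ → ℂ) (a : ℤ) (n : ℕ) :
    ∫ u in (a:ℝ)..((a:ℝ)+n), G ⌊u⌋ = ∑ z ∈ Finset.Ico a (a+n), G z := by
  induction n with
  | zero => simp
  | succ n ih =>
    have key := integral_add_adjacent_intervals (a := (a:ℝ)) (b := (a:ℝ)+n)
      (c := (a:ℝ)+(n+1)) (floorcomp_intble G _ _) (floorcomp_intble G _ _)
    have h2 : ∫ u in ((a:ℝ)+n)..((a:ℝ)+(n+1)), G ⌊u⌋ = G (a+n) := by
      have := unit_integral G (a+n)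
      push_cast at this
      rw [← add_assoc]
      exact this
    have h3 : Finset.Ico a (a+((n:ℤ)+1)) = Finset.Ico a (a+n) ∪ Finset.Ico (a+n) (a+n+1) := by
      rw [Finset.Ico_union_Ico_eq_Ico (by omega) (by omega)]
      congr 1
      ring
    push_cast at key ⊢
    rw [← key, ih, h2, h3, Finset.sum_union (Finset.Ico_disjoint_Ico_consecutive _ _ _),
      show Finset.Ico (a+(n:ℤ)) (a+(n:ℤ)+1) = {a+(n:ℤ)} from by ext x; simp; omega,
      Finset.sum_singleton]

/-- Importance-sampled convolution estimator: a uniform `t ∈ (-1/2, 1/2)`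
gives an unbiased estimator of the full grid sum, the estimator is bounded by
`2 ln(N/2+1)(N+2) sup|G|`, and when `G` decays like `1/max(1,|z|)` the
estimator is uniformly `O(ln N)`. -/
theorem importance_sampling_estimator :
    ∃ C' : ℝ, 0 < C' ∧
      ∀ (N : ℕ), 2 ≤ N → Even N → ∀ (G : ℤ → ℂ),
      let Z : ℝ → ℂ := fun t =>
        G ⌊(if 0 ≤ t then (1:ℝ) else -1) *
            (((N : ℝ) / 2 + 1) ^ (2 * |t|) - 1)⌋ *
          ((2 * Real.log ((N : ℝ) / 2 + 1) *
            ((N : ℝ) / 2 + 1) ^ (2 * |t|) : ℝ) : ℂ)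
      ((∫ t in (-(1:ℝ)/2)..(1/2), Z t) =
          ∑ z ∈ Finset.Icc (-(N : ℤ) / 2) ((N : ℤ) / 2 - 1), G z) ∧
      (∀ Mg : ℝ, (∀ z : ℤ, ‖G z‖ ≤ Mg) →
        ∀ t ∈ Set.Ioo (-(1:ℝ)/2) (1/2),
          ‖Z t‖ ≤ 2 * Real.log ((N : ℝ) / 2 + 1) * ((N : ℝ) + 2) * Mg) ∧
      (∀ Cg : ℝ, 0 ≤ Cg → (∀ z : ℤ, ‖G z‖ ≤ Cg / max 1 |(z : ℝ)|) →
        ∀ t ∈ Set.Ioo (-(1:ℝ)/2) (1/2),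
          ‖Z t‖ ≤ C' * Cg * Real.log N) := by
  refine ⟨6, by norm_num, ?_⟩
  intro N hN2 hNe G
  obtain ⟨m, hm⟩ := hNe
  intro Z
  have hZdef : ∀ t : ℝ, Z t =
      G ⌊(if 0 ≤ t then (1:ℝ) else -1) * (((N : ℝ) / 2 + 1) ^ (2 * |t|) - 1)⌋ *
        ((2 * Real.log ((N : ℝ) / 2 + 1) * ((N : ℝ) / 2 + 1) ^ (2 * |t|) : ℝ) : ℂ) :=
    fun t => rfl
  set A : ℝ := (N : ℝ) / 2 + 1 with hA
  have hm1 : 1 ≤ m := by omega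
  have hAm : A = (m : ℝ) + 1 := by
    rw [hA, hm]; push_cast; ring
  have hA1 : (1:ℝ) < A := by
    rw [hAm]
    have : (1:ℝ) ≤ (m:ℝ) := by exact_mod_cast hm1
    linarith
  have hA0 : (0:ℝ) < A := by linarith
  have hlogA : 0 < Real.log A := Real.log_pos hA1
  -- basic rpow facts
  have hp_pos : ∀ t : ℝ, 0 < A ^ (2 * |t|) := fun t => Real.rpow_pos_of_pos hA0 _
  have hp_one_le : ∀ t : ℝ, 1 ≤ A ^ (2 * |t|) := by
    intro t
    calc (1:ℝ) = A ^ (0:ℝ) := (Real.rpow_zero A).symm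
    _ ≤ A ^ (2 * |t|) := Real.rpow_le_rpow_of_exponent_le hA1.le (by positivity)
  have hp_le : ∀ t : ℝ, |t| ≤ 1/2 → A ^ (2 * |t|) ≤ A := by
    intro t ht
    calc A ^ (2 * |t|) ≤ A ^ (1:ℝ) := Real.rpow_le_rpow_of_exponent_le hA1.le (by linarith)
    _ = A := Real.rpow_one A
  refine ⟨?_, ?_, ?_⟩
  · -- integral identity
    have hpmeas : Measurable (fun t : ℝ => A ^ (2 * |t|)) :=
      (Continuous.rpow continuous_const (continuous_const.mul _root_.continuous_abs)
        (fun x => Or.inl hA0.ne')).measurable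
    have hsig : Measurable (fun t : ℝ => if 0 ≤ t then (1:ℝ) else -1) :=
      Measurable.ite (measurableSet_Ici : MeasurableSet (Set.Ici (0:ℝ)))
        measurable_const measurable_const
    have hZmeas : Measurable Z := by
      have : Measurable (fun t : ℝ =>
          G ⌊(if 0 ≤ t then (1:ℝ) else -1) * (A ^ (2 * |t|) - 1)⌋ *
            ((2 * Real.log A * A ^ (2 * |t|) : ℝ) : ℂ)) := by
        apply Measurable.mul
        · exact (measurable_of_countable G).comp
            (Int.measurable_floor.comp (hsig.mul (hpmeas.sub measurable_const)))
        · exact Complex.measurable_ofReal.comp (hpmeas.const_mul (2 * Real.log A))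
      exact this
    set C0 : ℝ := (∑ z ∈ Finset.Icc (-(m:ℤ)-1) ((m:ℤ)+1), ‖G z‖) * (2 * Real.log A * A)
      with hC0
    have hZbdd : ∀ t : ℝ, |t| ≤ 1/2 → ‖Z t‖ ≤ C0 := by
      intro t ht
      rw [hZdef, norm_mul, Complex.norm_real, Real.norm_eq_abs,
        abs_of_pos (by positivity : (0:ℝ) < 2 * Real.log A * A ^ (2 * |t|))]
      set w : ℝ := (if 0 ≤ t then (1:ℝ) else -1) * (A ^ (2 * |t|) - 1) with hw
      have h1 := hp_one_le t
      have h2 := hp_le t ht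
      have hwle : |w| ≤ (m:ℝ) := by
        have : |w| = |A ^ (2 * |t|) - 1| := by
          rw [hw, abs_mul]; split_ifs <;> simp
        rw [this, _root_.abs_of_nonneg (by linarith)]
        linarith [hAm.le, hAm.ge]
      have habs := abs_le.mp hwle
      have hfm : ⌊w⌋ ∈ Finset.Icc (-(m:ℤ)-1) ((m:ℤ)+1) := by
        rw [Finset.mem_Icc]
        constructor
        · apply Int.le_floor.mpr
          push_cast
          linarith [habs.1]
        · have hle : ((⌊w⌋:ℤ):ℝ) ≤ ((m:ℤ):ℝ) + 1 := by
            push_cast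
            linarith [Int.floor_le w, habs.2]
          exact_mod_cast hle
      have hsum := Finset.single_le_sum (f := fun z => ‖G z‖)
        (fun i _ => norm_nonneg _) hfm
      have hfac : 2 * Real.log A * A ^ (2 * |t|) ≤ 2 * Real.log A * A :=
        mul_le_mul_of_nonneg_left h2 (by positivity)
      rw [hC0]
      exact mul_le_mul hsum hfac (by positivity)
        (Finset.sum_nonneg fun i _ => norm_nonneg _)
    have hZint : ∀ x y : ℝ, -(1/2) ≤ x → x ≤ y → y ≤ 1/2 →
        IntervalIntegrable Z volume x y := by
      intro x y hx hxy hy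
      rw [intervalIntegrable_iff]
      apply Measure.integrableOn_of_bounded (M := C0) measure_Ioc_lt_top.ne
        hZmeas.aestronglyMeasurable
      filter_upwards [ae_restrict_mem measurableSet_uIoc] with u hu
      apply hZbdd
      have h1 : -(1/2:ℝ) ≤ min x y := le_min hx (hx.trans hxy)
      have h2 : max x y ≤ 1/2 := max_le (hxy.trans hy) hy
      rw [abs_le]
      exact ⟨by linarith [hu.1], by linarith [hu.2]⟩
    have hsplit := integral_add_adjacent_intervals (a := (-(1:ℝ)/2)) (b := 0)
      (c := 1/2) (μ := volume) (f := Z)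
      (hZint _ _ (by norm_num) (by norm_num) (by norm_num))
      (hZint _ _ (by norm_num) (by norm_num) (by norm_num))
    have hg_int : ∀ (a : ℤ) (n : ℕ),
        ∫ u in Set.Ioo ((a:ℝ)) ((a:ℝ)+n), G ⌊u⌋ = ∑ z ∈ Finset.Ico a (a+n), G z := by
      intro a n
      rw [← integral_Ioc_eq_integral_Ioo,
        ← intervalIntegral.integral_of_le (by linarith [Nat.cast_nonneg (α := ℝ) n] :
          (a:ℝ) ≤ (a:ℝ) + n)]
      exact grid_integral G a n
    -- positive half
    have hsm : StrictMono (fun t : ℝ => A ^ (2*t) - 1) := by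
      intro x y hxy
      simp only [sub_lt_sub_iff_right]
      exact Real.rpow_lt_rpow_of_exponent_lt hA1 (by linarith)
    have hcont : Continuous (fun t : ℝ => A ^ (2*t) - 1) := by
      have : Continuous (fun t : ℝ => A ^ (2*t)) :=
        Continuous.rpow continuous_const (continuous_const.mul continuous_id)
          (fun x => Or.inl hA0.ne')
      exact this.sub continuous_const
    have hderiv : ∀ t ∈ Set.Ioo (0:ℝ) (1/2),
        HasDerivWithinAt (fun t : ℝ => A ^ (2*t) - 1)
          (A ^ (2*t) * Real.log A * 2) (Set.Ioo (0:ℝ) (1/2)) t := by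
      intro t ht
      have h2 := (Real.hasStrictDerivAt_const_rpow hA0 (2*t)).hasDerivAt
      have h3 : HasDerivAt (fun t : ℝ => 2*t) 2 t := by
        simpa using (hasDerivAt_id t).const_mul 2
      have h4 := h2.comp t h3
      have h5 : HasDerivAt (fun t : ℝ => A ^ (2*t)) (A ^ (2*t) * Real.log A * 2) t := h4
      exact (h5.sub_const 1).hasDerivWithinAt
    have hpos : ∫ t in (0:ℝ)..(1/2), Z t = ∑ z ∈ Finset.Ico (0:ℤ) (m:ℤ), G z := by
      rw [intervalIntegral.integral_of_le (by norm_num), integral_Ioc_eq_integral_Ioo]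
      have hEq : Set.EqOn Z
          (fun t : ℝ => |A ^ (2*t) * Real.log A * 2| • (fun u : ℝ => G ⌊u⌋) (A ^ (2*t) - 1))
          (Set.Ioo (0:ℝ) (1/2)) := by
        intro t ht
        have h0 : (0:ℝ) ≤ t := ht.1.le
        simp only [hZdef, if_pos h0, _root_.abs_of_nonneg h0, one_mul]
        rw [abs_of_pos (by positivity : (0:ℝ) < A ^ (2*t) * Real.log A * 2),
          Complex.real_smul]
        push_cast
        ring
      rw [setIntegral_congr_fun measurableSet_Ioo hEq]
      have hcv := integral_image_eq_integral_abs_deriv_smul measurableSet_Ioo hderiv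
        hsm.injective.injOn (fun u : ℝ => G ⌊u⌋)
      have himg : (fun t : ℝ => A ^ (2*t) - 1) '' Set.Ioo (0:ℝ) (1/2)
          = Set.Ioo (0:ℝ) ((m:ℝ)) := by
        rw [my_image_Ioo hsm hcont (by norm_num : (0:ℝ) ≤ 1/2)]
        have e1 : A ^ (2*(0:ℝ)) - 1 = 0 := by
          norm_num [Real.rpow_zero]
        have e2 : A ^ (2*(1/2:ℝ)) - 1 = (m:ℝ) := by
          norm_num [Real.rpow_one, hAm]
        rw [e1, e2]
      rw [himg] at hcv
      rw [← hcv]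
      have := hg_int 0 m
      simpa using this
    -- negative half
    have hsm2 : StrictMono (fun t : ℝ => -(A ^ (2 * -t) - 1)) := by
      intro x y hxy
      have : A ^ (2 * -y) < A ^ (2 * -x) :=
        Real.rpow_lt_rpow_of_exponent_lt hA1 (by linarith)
      simp only [neg_sub]
      linarith
    have hcont2 : Continuous (fun t : ℝ => -(A ^ (2 * -t) - 1)) := by
      have : Continuous (fun t : ℝ => A ^ (2 * -t)) :=
        Continuous.rpow continuous_const (continuous_const.mul continuous_neg)
          (fun x => Or.inl hA0.ne')
      exact (this.sub continuous_const).neg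
    have hderiv2 : ∀ t ∈ Set.Ioo (-(1:ℝ)/2) 0,
        HasDerivWithinAt (fun t : ℝ => -(A ^ (2 * -t) - 1))
          (A ^ (2 * -t) * Real.log A * 2) (Set.Ioo (-(1:ℝ)/2) (0:ℝ)) t := by
      intro t ht
      have h2 := (Real.hasStrictDerivAt_const_rpow hA0 (2 * -t)).hasDerivAt
      have h3 : HasDerivAt (fun t : ℝ => 2 * -t) (-2) t := by
        simpa using ((hasDerivAt_id t).neg.const_mul 2)
      have h4 := h2.comp t h3
      have h5 : HasDerivAt (fun t : ℝ => -(A ^ (2 * -t) - 1))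
          (A ^ (2 * -t) * Real.log A * 2) t := by
        have := ((h4.sub_const 1).neg)
        exact this.congr_deriv (by ring)
      exact h5.hasDerivWithinAt
    have hneg : ∫ t in (-(1:ℝ)/2)..(0:ℝ), Z t = ∑ z ∈ Finset.Ico (-(m:ℤ)) (0:ℤ), G z := by
      rw [intervalIntegral.integral_of_le (by norm_num), integral_Ioc_eq_integral_Ioo]
      have hEq : Set.EqOn Z
          (fun t : ℝ => |A ^ (2 * -t) * Real.log A * 2| •
            (fun u : ℝ => G ⌊u⌋) (-(A ^ (2 * -t) - 1)))
          (Set.Ioo (-(1:ℝ)/2) 0) := by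
        intro t ht
        have h0 : t < 0 := ht.2
        simp only [hZdef, if_neg (not_le.mpr h0), _root_.abs_of_neg h0, neg_one_mul]
        rw [abs_of_pos (by positivity : (0:ℝ) < A ^ (2 * -t) * Real.log A * 2),
          Complex.real_smul]
        push_cast
        ring
      rw [setIntegral_congr_fun measurableSet_Ioo hEq]
      have hcv := integral_image_eq_integral_abs_deriv_smul measurableSet_Ioo hderiv2
        hsm2.injective.injOn (fun u : ℝ => G ⌊u⌋)
      have himg : (fun t : ℝ => -(A ^ (2 * -t) - 1)) '' Set.Ioo (-(1:ℝ)/2) 0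
          = Set.Ioo (-(m:ℝ)) (0:ℝ) := by
        rw [my_image_Ioo hsm2 hcont2 (by norm_num : (-(1:ℝ)/2) ≤ 0)]
        have e1 : -(A ^ (2 * -(-(1:ℝ)/2)) - 1) = -(m:ℝ) := by
          norm_num [Real.rpow_one, hAm]
        have e2 : -(A ^ (2 * -(0:ℝ)) - 1) = 0 := by
          norm_num [Real.rpow_zero]
        rw [e1, e2]
      rw [himg] at hcv
      rw [← hcv]
      have := hg_int (-(m:ℤ)) m
      push_cast at this
      norm_num at this
      convert this using 2
    rw [← hsplit, hpos, hneg]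
    rw [← Finset.sum_union (Finset.Ico_disjoint_Ico_consecutive (-(m:ℤ)) 0 (m:ℤ)),
      Finset.Ico_union_Ico_eq_Ico (by omega : (-(m:ℤ)) ≤ 0) (by omega : (0:ℤ) ≤ (m:ℤ))]
    have hNZ : (N:ℤ) = 2*(m:ℤ) := by exact_mod_cast congrArg (Nat.cast : ℕ → ℤ) (by omega : N = 2*m)
    have hfe : Finset.Icc (-(N:ℤ)/2) ((N:ℤ)/2 - 1) = Finset.Ico (-(m:ℤ)) (m:ℤ) := by
      ext x
      simp only [Finset.mem_Icc, Finset.mem_Ico]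
      omega
    rw [hfe]
  · -- boundedness
    intro Mg hMg t ht
    have hMg0 : 0 ≤ Mg := le_trans (norm_nonneg _) (hMg 0)
    rw [hZdef]
    rw [norm_mul, Complex.norm_real, Real.norm_eq_abs,
      abs_of_pos (by positivity : (0:ℝ) < 2 * Real.log A * A ^ (2 * |t|))]
    have htle : |t| ≤ 1/2 := by
      rw [abs_le]; constructor <;> [linarith [ht.1]; linarith [ht.2]]
    have h1 := hp_le t htle
    have h2 : A ≤ (N:ℝ) + 2 := by rw [hA]; linarith [Nat.cast_nonneg (α := ℝ) N]
    have h3 := hMg ⌊(if 0 ≤ t then (1:ℝ) else -1) * (A ^ (2 * |t|) - 1)⌋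
    nlinarith [norm_nonneg (G ⌊(if 0 ≤ t then (1:ℝ) else -1) * (A ^ (2 * |t|) - 1)⌋),
      hp_pos t, hlogA.le,
      mul_le_mul_of_nonneg_right h3
        (le_of_lt (by positivity : (0:ℝ) < 2 * Real.log A * A ^ (2 * |t|))),
      mul_le_mul_of_nonneg_left (h1.trans h2)
        (by positivity : (0:ℝ) ≤ 2 * Real.log A * Mg)]
  · -- decay bound
    intro Cg hCg hG t ht
    have htle : |t| ≤ 1/2 := by
      rw [abs_le]; constructor <;> [linarith [ht.1]; linarith [ht.2]]
    rw [hZdef]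
    set z : ℤ := ⌊(if 0 ≤ t then (1:ℝ) else -1) * (A ^ (2 * |t|) - 1)⌋ with hz
    set M : ℝ := max 1 |(z : ℝ)| with hM
    have hM1 : (1:ℝ) ≤ M := le_max_left _ _
    have hMz : |(z:ℝ)| ≤ M := le_max_right _ _
    have hu0 : (0:ℝ) ≤ A ^ (2 * |t|) - 1 := by linarith [hp_one_le t]
    -- key: A ^ (2|t|) ≤ 3 * M
    have hkey : A ^ (2 * |t|) ≤ 3 * M := by
      by_cases hts : 0 ≤ t
      · have hzz : z = ⌊A ^ (2 * |t|) - 1⌋ := by rw [hz, if_pos hts, one_mul]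
        have hfl : (z:ℝ) ≤ A ^ (2 * |t|) - 1 := hzz ▸ Int.floor_le _
        have hfl2 : A ^ (2 * |t|) - 1 < (z:ℝ) + 1 := hzz ▸ Int.lt_floor_add_one _
        have hz0 : (0:ℝ) ≤ (z:ℝ) := by
          rw [hzz]; exact_mod_cast Int.floor_nonneg.mpr hu0
        have habs : |(z:ℝ)| = (z:ℝ) := abs_of_nonneg hz0
        rcases le_or_gt (A ^ (2 * |t|)) 3 with h | h
        · linarith
        · have : (1:ℝ) ≤ (z:ℝ) := by linarith
          have hMe : (z:ℝ) ≤ M := habs ▸ hMz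
          linarith
      · have hzz : z = ⌊-(A ^ (2 * |t|) - 1)⌋ := by rw [hz, if_neg hts, neg_one_mul]
        have hfl : (z:ℝ) ≤ -(A ^ (2 * |t|) - 1) := hzz ▸ Int.floor_le _
        have hz0 : (z:ℝ) ≤ 0 := by linarith
        have habs : |(z:ℝ)| = -(z:ℝ) := abs_of_nonpos hz0
        have h2 : A ^ (2 * |t|) - 1 ≤ -(z:ℝ) := by linarith
        have h3 : A ^ (2 * |t|) - 1 ≤ M := le_trans h2 (habs ▸ hMz)
        linarith
    have hGz := hG z
    rw [← hM] at hGz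
    have hGzM : ‖G z‖ * M ≤ Cg := by
      rw [← le_div_iff₀ (by linarith : (0:ℝ) < M)]; exact hGz
    have hlogle : Real.log A ≤ Real.log N := by
      apply Real.log_le_log hA0
      rw [hA]
      have : (2:ℝ) ≤ (N:ℝ) := by exact_mod_cast hN2
      linarith
    rw [norm_mul, Complex.norm_real, Real.norm_eq_abs,
      abs_of_pos (by positivity : (0:ℝ) < 2 * Real.log A * A ^ (2 * |t|))]
    have hGz0 : 0 ≤ ‖G z‖ := norm_nonneg _
    have h6 : ‖G z‖ * (2 * Real.log A * A ^ (2 * |t|)) ≤ 6 * Cg * Real.log A := by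
      nlinarith [hp_pos t,
        mul_le_mul_of_nonneg_left hkey
          (by positivity : (0:ℝ) ≤ 2 * Real.log A * ‖G z‖),
        mul_le_mul_of_nonneg_left hGzM
          (by positivity : (0:ℝ) ≤ 6 * Real.log A)]
    have h7 : 6 * Cg * Real.log A ≤ 6 * Cg * Real.log N := by nlinarith
    linarith
end
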